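/- Let j be a natural number and a, b, c real numbers with a ≠ b and with all relevant Pochhammer denominators nonzero. Then the terminating sum ∑_{k=0}^{j} [(a)_k (b)_k (−j)_k]/[(c)_k (a+b−c+2−j)_k · k!] equals [a/(a−b)] · (c−a−1)_j (c−b)_j / [(c)_j (c−a−b−1)_j] + [b/(b−a)] · (c−a)_j (c−b−1)_j / [(c)_j (c−a−b−1)_j]. -/

import Mathlib

/-- Rising factorial (Pochhammer symbol) on ℝ. -/
def poch (x : ℝ) : ℕ → ℝ
  | 0 => 1
  | k + 1 => poch x k * (x + k)

@[simp] lemma poch_zero (x : ℝ) : poch x 0 = 1 := rfl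
lemma poch_succ (x : ℝ) (k : ℕ) : poch x (k+1) = poch x k * (x + k) := rfl
@[simp] lemma poch_one (x : ℝ) : poch x 1 = x := by simp [poch]

lemma poch_succ_left (x : ℝ) (n : ℕ) : poch x (n+1) = x * poch (x+1) n := by
  induction n with
  | zero => simp [poch]
  | succ n ih =>
      rw [poch_succ, ih, poch_succ]; push_cast; ring

lemma poch_add (x : ℝ) (m n : ℕ) : poch x (m+n) = poch x m * poch (x+m) n := by
  induction n with
  | zero => simp
  | succ n ih =>
      rw [show m + (n+1) = (m+n)+1 from rfl, poch_succ, ih, poch_succ]; push_cast; ring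

lemma poch_reflect (x : ℝ) (n : ℕ) : poch x n = (-1)^n * poch (1 - x - n) n := by
  induction n with
  | zero => simp
  | succ n ih =>
      rw [poch_succ, ih, show (1 : ℝ) - x - (n+1 : ℕ) = (1 - x - n) - 1 by push_cast; ring,
        show ((1 : ℝ) - x - n - 1) = (1 - x - n - 1) from rfl]
      rw [poch_succ_left (1 - x - (n:ℝ) - 1) n]
      push_cast; ring

/-- Cleared form of the Pfaff–Saalschütz theorem. -/
lemma saal : ∀ (n : ℕ) (a b c : ℝ),
    ∑ k ∈ Finset.range (n+1), ((n.choose k : ℝ) * (poch a k * poch b k *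
      (poch (c + k) (n - k) * poch (c - a - b) (n - k))))
      = poch (c - a) n * poch (c - b) n := by
  intro n
  induction n with
  | zero => intro a b c; simp
  | succ n ih =>
      intro a b c
      set d : ℝ := c - a - b with hd
      set t2 : ℕ → ℝ := fun k => (n.choose k : ℝ) * (poch a k * poch b k *
        (poch (c + 1 + k) (n - k) * poch (d + 1) (n - k))) with ht2
      set g : ℕ → ℝ := fun k => match k with
        | 0 => 0
        | j + 1 => -((n.choose j : ℝ) * (poch a (j+1) * poch b (j+1) *
            (poch (c + 1 + j) (n - j) * poch (d + 1) (n - j)))) with hg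
      have hlocal : ∀ k ∈ Finset.range (n+2),
          ((n+1).choose k : ℝ) * (poch a k * poch b k *
            (poch (c + k) (n + 1 - k) * poch d (n + 1 - k)))
          = (c - a) * (c - b) * t2 k + (g (k+1) - g k) := by
        intro k hk
        rw [Finset.mem_range] at hk
        match k with
        | 0 =>
            simp only [ht2, hg, Nat.choose_zero_right, Nat.cast_one, Nat.sub_zero,
              poch_zero, Nat.cast_zero, add_zero]
            rw [poch_succ_left c n, poch_succ_left d n]
            simp only [zero_add, poch_one, hd]
            norm_num
            ring
        | j + 1 =>
            have hj : j ≤ n := by omega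
            obtain ⟨m, hm⟩ := Nat.exists_eq_add_of_le hj
            match m, hm with
            | 0, hm =>
                simp only [ht2, hg, hm, Nat.add_zero, Nat.choose_succ_self, Nat.cast_zero,
                  Nat.choose_self, Nat.cast_one, Nat.sub_self, poch_zero,
                  Nat.succ_sub_succ, zero_mul]
                simp [Nat.choose_succ_self]
            | m + 1, hm =>
                simp only [ht2, hg]
                rw [show n + 1 - (j+1) = m+1 by omega, show n - (j+1) = m by omega,
                  show n - j = m+1 by omega]
                rw [poch_succ (d+1) m, poch_succ_left d m, poch_succ a (j+1), poch_succ b (j+1)]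
                push_cast
                rw [poch_succ_left (c + ((j:ℝ)+1)) m, poch_succ_left (c + 1 + (j:ℝ)) m]
                rw [show c + ((j:ℝ)+1) + 1 = c + 1 + ((j:ℝ)+1) by ring,
                  show c + 1 + (j:ℝ) + 1 = c + 1 + ((j:ℝ)+1) by ring]
                have hpas : (((n+1).choose (j+1) : ℕ) : ℝ)
                    = (n.choose j : ℝ) + (n.choose (j+1) : ℝ) := by
                  rw [Nat.choose_succ_succ]; push_cast; ring
                have hrel : (n.choose (j+1) : ℝ) * ((j:ℝ)+1)
                    = (n.choose j : ℝ) * ((m:ℝ)+1) := by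
                  have h := Nat.choose_succ_right_eq n j
                  rw [show n - j = m+1 by omega] at h
                  exact_mod_cast congrArg (Nat.cast (R := ℝ)) h
                push_cast at hpas
                rw [hpas]
                linear_combination (poch a (j+1) * poch b (j+1) *
                  poch (c + 1 + ((j:ℝ)+1)) m * poch (d+1) m * (c + ((j:ℝ)+1))) * hrel
      calc ∑ k ∈ Finset.range (n+2), ((n+1).choose k : ℝ) * (poch a k * poch b k *
            (poch (c + k) (n + 1 - k) * poch d (n + 1 - k)))
          = ∑ k ∈ Finset.range (n+2), ((c - a) * (c - b) * t2 k + (g (k+1) - g k)) :=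
            Finset.sum_congr rfl hlocal
        _ = (c - a) * (c - b) * ∑ k ∈ Finset.range (n+2), t2 k + (g (n+2) - g 0) := by
            rw [Finset.sum_add_distrib, Finset.sum_range_sub g, ← Finset.mul_sum]
        _ = (c - a) * (c - b) * ∑ k ∈ Finset.range (n+1), t2 k := by
            rw [Finset.sum_range_succ]
            simp [ht2, hg, Nat.choose_succ_self]
        _ = (c - a) * (c - b) * (poch (c + 1 - a) n * poch (c + 1 - b) n) := by
            rw [ht2]
            have : d + 1 = c + 1 - a - b := by rw [hd]; ring
            simp only [this]
            rw [ih a b (c+1)]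
        _ = poch (c - a) (n+1) * poch (c - b) (n+1) := by
            rw [poch_succ_left (c-a) n, poch_succ_left (c-b) n,
              show c - a + 1 = c + 1 - a by ring, show c - b + 1 = c + 1 - b by ring]
            ring


lemma offbyone (j : ℕ) (a b c : ℝ) :
    (a - b) * ∑ k ∈ Finset.range (j+1), ((j.choose k : ℝ) * (poch a k * poch b k *
      (poch (c + k) (j - k) * poch (c - a - b - 1) (j - k))))
    = a * (poch (c - a - 1) j * poch (c - b) j)
      - b * (poch (c - a) j * poch (c - b - 1) j) := by
  have h1 := saal j (a+1) b c
  have h2 := saal j a (b+1) c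
  rw [show c-(a+1)-b = c-a-b-1 by ring, show c-(a+1) = c-a-1 by ring] at h1
  rw [show c-a-(b+1) = c-a-b-1 by ring, show c-(b+1) = c-b-1 by ring] at h2
  rw [← h1, ← h2, Finset.mul_sum, Finset.mul_sum, Finset.mul_sum, ← Finset.sum_sub_distrib]
  apply Finset.sum_congr rfl
  intro k _
  have ca : a * poch (a+1) k = poch a k * (a + k) := by rw [← poch_succ_left, poch_succ]
  have cb : b * poch (b+1) k = poch b k * (b + k) := by rw [← poch_succ_left, poch_succ]
  linear_combination (-(j.choose k : ℝ) * poch b k *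
      (poch (c + k) (j - k) * poch (c - a - b - 1) (j - k))) * ca
    + ((j.choose k : ℝ) * poch a k *
      (poch (c + k) (j - k) * poch (c - a - b - 1) (j - k))) * cb

lemma poch_neg_nat (j : ℕ) : ∀ k, k ≤ j →
    poch (-(j:ℝ)) k = (-1)^k * (Nat.factorial k : ℝ) * (j.choose k : ℝ) := by
  intro k
  induction k with
  | zero => intro _; simp [poch_zero]
  | succ k ih =>
      intro hk
      have hk' : k ≤ j := by omega
      rw [poch_succ, ih hk']
      have h := Nat.choose_succ_right_eq j k
      have hc : ((j.choose (k+1)) : ℝ) * ((k:ℝ)+1) = (j.choose k : ℝ) * ((j:ℝ) - k) := by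
        have h2 := congrArg (Nat.cast (R := ℝ)) h
        push_cast [Nat.cast_sub hk'] at h2
        linarith [h2]
      rw [Nat.factorial_succ]
      push_cast
      linear_combination ((-1:ℝ)^k * (Nat.factorial k : ℝ)) * hc


/-- Evaluation of a terminating ₃F₂ at 1 exceeding Saalschützian balance by 1. -/
theorem saalschuetz_plus_one (j : ℕ) (a b c : ℝ) (hab : a ≠ b)
    (hc : poch c j ≠ 0)
    (hd : ∀ k ≤ j, poch (a + b - c + 2 - (j : ℝ)) k ≠ 0)
    (hcab : poch (c - a - b - 1) j ≠ 0) :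
    ∑ k ∈ Finset.range (j + 1),
        poch a k * poch b k * poch (-(j : ℝ)) k
          / (poch c k * poch (a + b - c + 2 - (j : ℝ)) k * (Nat.factorial k : ℝ))
      = a / (a - b) * (poch (c - a - 1) j * poch (c - b) j
            / (poch c j * poch (c - a - b - 1) j))
        + b / (b - a) * (poch (c - a) j * poch (c - b - 1) j
            / (poch c j * poch (c - a - b - 1) j)) := by
  have hxj : poch (a + b - c + 2 - (j : ℝ)) j ≠ 0 := hd j le_rfl
  have hab' : a - b ≠ 0 := sub_ne_zero.mpr hab
  have hba' : b - a ≠ 0 := sub_ne_zero.mpr (Ne.symm hab)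
  have hrefl : poch (c - a - b - 1) j = (-1)^j * poch (a + b - c + 2 - (j : ℝ)) j := by
    rw [poch_reflect (c - a - b - 1) j,
      show (1:ℝ) - (c - a - b - 1) - (j:ℝ) = a + b - c + 2 - (j:ℝ) by ring]
  -- per-term rewrite
  have hterm : ∀ k ∈ Finset.range (j+1),
      poch a k * poch b k * poch (-(j : ℝ)) k
        / (poch c k * poch (a + b - c + 2 - (j : ℝ)) k * (Nat.factorial k : ℝ))
      = ((j.choose k : ℝ) * (poch a k * poch b k *
          (poch (c + k) (j - k) * poch (c - a - b - 1) (j - k))))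
          * ((-1)^j / (poch c j * poch (a + b - c + 2 - (j : ℝ)) j)) := by
    intro k hk
    rw [Finset.mem_range] at hk
    have hkj : k ≤ j := by omega
    obtain ⟨m, hm⟩ := Nat.exists_eq_add_of_le hkj
    have hjk : j - k = m := by omega
    have hsplitc : poch c j = poch c k * poch (c + k) m := by rw [hm, poch_add]
    have hsplitx := poch_add (a + b - c + 2 - (j : ℝ)) k m
    rw [← hm] at hsplitx
    have hjr : (j : ℝ) = (k : ℝ) + m := by exact_mod_cast congrArg (Nat.cast (R := ℝ)) hm
    have hxrefl : poch ((a + b - c + 2 - (j : ℝ)) + k) m = (-1)^m * poch (c - a - b - 1) m := by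
      rw [poch_reflect ((a + b - c + 2 - (j : ℝ)) + k) m,
        show (1:ℝ) - ((a + b - c + 2 - (j : ℝ)) + k) - (m:ℝ) = c - a - b - 1 by
          rw [hjr]; ring]
    have hck : poch c k ≠ 0 := by
      intro h; exact hc (by rw [hsplitc, h, zero_mul])
    have hckm : poch (c + k) m ≠ 0 := by
      intro h; exact hc (by rw [hsplitc, h, mul_zero])
    have hxk : poch (a + b - c + 2 - (j : ℝ)) k ≠ 0 := hd k hkj
    have hcabm : poch (c - a - b - 1) m ≠ 0 := by
      intro h
      apply hxj
      rw [hsplitx, hxrefl, h, mul_zero, mul_zero]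
    have hfk : (Nat.factorial k : ℝ) ≠ 0 := by positivity
    have hpow : ((-1:ℝ))^j = (-1)^k * (-1)^m := by rw [hm, pow_add]
    have hmm : ((-1:ℝ))^m * (-1)^m = 1 := by rw [← mul_pow]; norm_num
    rw [hjk, poch_neg_nat j k hkj, hsplitc, hsplitx, hxrefl, hpow]
    field_simp
  rw [Finset.sum_congr rfl hterm, ← Finset.sum_mul]
  have hsum := offbyone j a b c
  have hS : ∑ k ∈ Finset.range (j+1), ((j.choose k : ℝ) * (poch a k * poch b k *
      (poch (c + k) (j - k) * poch (c - a - b - 1) (j - k))))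
      = (a * (poch (c - a - 1) j * poch (c - b) j)
        - b * (poch (c - a) j * poch (c - b - 1) j)) / (a - b) := by
    rw [eq_div_iff hab']
    linear_combination hsum
  rw [hS, hrefl]
  have hs1 : ((-1:ℝ)^j) * ((-1:ℝ)^j) = 1 := by rw [← mul_pow]; norm_num
  have hs0 : ((-1:ℝ)^j) ≠ 0 := by positivity
  generalize hsg : ((-1:ℝ))^j = s at hs1 hs0 ⊢
  field_simp
  linear_combination ((b - a) *
    (a * (poch (c - a - 1) j * poch (c - b) j) - b * (poch (c - a) j * poch (c - b - 1) j))) * hs1
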